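/- Let H ∈ ℍ[q₁,…,qₙ] be a nonzero polynomial that is not a unit, such that the principal right ideal ⟨H⟩ is radical and V_c(⟨H⟩) is irreducible. Then either H is irreducible, or there exists an irreducible polynomial Q ∈ ℍ[q₁,…,qₙ] with ⟨H⟩ = ⟨Q^s⟩ (i.e. H is, up to a multiplicative constant, the symmetrization of an irreducible polynomial). -/

import Mathlib

open scoped Quaternion

noncomputable section

/-- The quaternions. -/
abbrev ℍq : Type := Quaternion ℝ

/-- Slice regular polynomials in `n` quaternionic variables: formal polynomials with
quaternionic coefficients written on the right, with the slice (convolution) product. -/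
abbrev SP (n : ℕ) : Type := AddMonoidAlgebra ℍq (Fin n →₀ ℕ)

/-- Right ideals of `SP n`. -/
abbrev RIdeal (n : ℕ) := Submodule (SP n)ᵐᵒᵖ (SP n)

/-- Evaluation of a slice regular polynomial at a point of `ℍⁿ`:
`P(p) = ∑ p₁^{ℓ₁} ⋯ pₙ^{ℓₙ} a_{ℓ₁,…,ℓₙ}`. -/
def peval {n : ℕ} (p : Fin n → ℍq) (P : SP n) : ℍq :=
  Finsupp.sum P.coeff fun m a => (List.ofFn fun i => p i ^ m i).prod * a

/-- The regular conjugate `P^c`. -/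
def rconj {n : ℕ} (P : SP n) : SP n :=
  AddMonoidAlgebra.ofCoeff (Finsupp.mapRange (star : ℍq → ℍq) (star_zero _) P.coeff)

/-- The symmetrization `P^s = P * P^c`. -/
def symzn {n : ℕ} (P : SP n) : SP n := P * rconj P

/-- The sphere `𝕊` of quaternionic imaginary units. -/
def QSph : Set ℍq := {J | J ^ 2 = -1}

/-- The slice `ℂ_K = ℝ + ℝK`. -/
def CSlice (K : ℍq) : Set ℍq := {q | ∃ x y : ℝ, q = (x : ℍq) + (y : ℍq) * K}

/-- The points of `ℍⁿ` lying in some slice `ℂ_Kⁿ` (points with commuting components). -/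
def commSlice (n : ℕ) : Set (Fin n → ℍq) := {p | ∃ K ∈ QSph, ∀ i, p i ∈ CSlice K}

/-- The common zero set `V(I)` of a right ideal. -/
def Vq {n : ℕ} (I : RIdeal n) : Set (Fin n → ℍq) := {p | ∀ P ∈ I, peval p P = 0}

/-- `V_c(I) = V(I) ∩ ⋃_{K ∈ 𝕊} ℂ_Kⁿ`. -/
def Vc {n : ℕ} (I : RIdeal n) : Set (Fin n → ℍq) := Vq I ∩ commSlice n

/-- The spherical set `𝕊_a` of a point `a ∈ ℍⁿ`. -/
def SphSet {n : ℕ} (a : Fin n → ℍq) : Set (Fin n → ℍq) :=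
  {p | ∃ g : ℍq, g ≠ 0 ∧ ∀ i, p i = g⁻¹ * a i * g}

/-- The symmetrization `𝕊_Z = ⋃_{a ∈ Z} 𝕊_a` of a subset of `ℍⁿ`. -/
def SymmSet {n : ℕ} (Z : Set (Fin n → ℍq)) : Set (Fin n → ℍq) := ⋃ a ∈ Z, SphSet a

/-- `J(Z)`: the right ideal generated by the polynomials vanishing identically on `Z`. -/
def Jq {n : ℕ} (Z : Set (Fin n → ℍq)) : RIdeal n :=
  Submodule.span (SP n)ᵐᵒᵖ {P | ∀ p ∈ Z, peval p P = 0}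

/-- A right ideal is completely prime if `P*Q ∈ I` and `P*I ⊆ I` imply `P ∈ I` or `Q ∈ I`. -/
def CompletelyPrime {n : ℕ} (I : RIdeal n) : Prop :=
  ∀ P Q : SP n, P * Q ∈ I → (∀ R ∈ I, P * R ∈ I) → P ∈ I ∨ Q ∈ I

/-- The radical `√I`: the intersection of all completely prime right ideals containing `I`. -/
def radq {n : ℕ} (I : RIdeal n) : RIdeal n :=
  sInf {J : RIdeal n | CompletelyPrime J ∧ I ≤ J}

/-- A right ideal is quasi prime if `P*Q ∈ I` implies `P ∈ I` or `Q^s ∈ I`. -/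
def QuasiPrime {n : ℕ} (I : RIdeal n) : Prop :=
  ∀ P Q : SP n, P * Q ∈ I → P ∈ I ∨ symzn Q ∈ I

/-- A right ideal is two-sided if it is also closed under left multiplication. -/
def IsTwoSidedIdl {n : ℕ} (I : RIdeal n) : Prop :=
  ∀ P : SP n, ∀ Q ∈ I, P * Q ∈ I

/-- The symmetrized ideal `S(I)`: the right ideal generated by `{P^s : P ∈ I}`. -/
def SIdl {n : ℕ} (I : RIdeal n) : RIdeal n :=
  Submodule.span (SP n)ᵐᵒᵖ {Q | ∃ P ∈ I, Q = symzn P}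

/-- The product `I₁ * I₂`: the right ideal generated by `{P*Q : P ∈ I₁, Q ∈ I₂}`. -/
def prodIdl {n : ℕ} (I₁ I₂ : RIdeal n) : RIdeal n :=
  Submodule.span (SP n)ᵐᵒᵖ {x | ∃ P ∈ I₁, ∃ Q ∈ I₂, x = P * Q}

/-- Reducibility of the slice algebraic set `V_c(I)`. -/
def VcReducible {n : ℕ} (I : RIdeal n) : Prop :=
  ∃ I₁ I₂ : RIdeal n, I₁ ≠ ⊥ ∧ I₁ ≠ ⊤ ∧ I₂ ≠ ⊥ ∧ I₂ ≠ ⊤ ∧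
    ¬ I₁ ≤ I₂ ∧ ¬ I₂ ≤ I₁ ∧ Vc I = Vc I₁ ∪ Vc I₂

/-- Reducibility of the slice algebraic set `V(I)`. -/
def VReducible {n : ℕ} (I : RIdeal n) : Prop :=
  ∃ I₁ I₂ : RIdeal n, I₁ ≠ ⊥ ∧ I₁ ≠ ⊤ ∧ I₂ ≠ ⊥ ∧ I₂ ≠ ⊤ ∧
    ¬ I₁ ≤ I₂ ∧ ¬ I₂ ≤ I₁ ∧ Vq I = Vq I₁ ∪ Vq I₂

/-- An irreducible slice regular polynomial. -/
def IrredPoly {n : ℕ} (H : SP n) : Prop :=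
  H ≠ 0 ∧ ¬ IsUnit H ∧ ∀ P Q : SP n, H = P * Q → IsUnit P ∨ IsUnit Q

/-- The variable `q_i` as a slice regular polynomial. -/
def Xq {n : ℕ} (i : Fin n) : SP n := AddMonoidAlgebra.single (Finsupp.single i 1) 1

/-- A constant polynomial. -/
def Cq {n : ℕ} (a : ℍq) : SP n := AddMonoidAlgebra.single 0 a

/-- A polynomial has real coefficients. -/
def RealCoeffs {n : ℕ} (P : SP n) : Prop := ∀ m : Fin n →₀ ℕ, ∃ r : ℝ, P.coeff m = (r : ℍq)

/-! ### Auxiliary infrastructure -/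

section Aux

open AddMonoidAlgebra

variable {n : ℕ}

/-- Monomial evaluation. -/
def monoEv (p : Fin n → ℍq) (m : Fin n →₀ ℕ) : ℍq :=
  (List.ofFn fun i => p i ^ m i).prod

lemma peval_eq_sum (p : Fin n → ℍq) (P : SP n) :
    peval p P = Finsupp.sum P.coeff fun m a => monoEv p m * a := rfl

/-- `peval` as an additive monoid hom. -/
def pevalHom (p : Fin n → ℍq) : SP n →+ ℍq where
  toFun := peval p
  map_zero' := by simp [peval_eq_sum]
  map_add' f g := Finsupp.sum_add_index (by simp) (by intros; rw [mul_add])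

lemma pevalHom_apply (p : Fin n → ℍq) (P : SP n) : pevalHom p P = peval p P := rfl

lemma peval_single (p : Fin n → ℍq) (m : Fin n →₀ ℕ) (a : ℍq) :
    peval p (AddMonoidAlgebra.single m a) = monoEv p m * a := by
  simp [peval_eq_sum, AddMonoidAlgebra.coeff_single, Finsupp.sum_single_index]

lemma listProd_mul {k : ℕ} (f g : Fin k → ℍq)
    (h : ∀ i j, Commute (f i) (g j)) :
    (List.ofFn fun i => f i * g i).prod = (List.ofFn f).prod * (List.ofFn g).prod := by
  induction k with
  | zero => simp
  | succ k ih =>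
    rw [List.ofFn_succ, List.ofFn_succ (f := f), List.ofFn_succ (f := g)]
    simp only [List.prod_cons]
    rw [ih (fun i => f i.succ) (fun i => g i.succ) (fun i j => h i.succ j.succ)]
    have hc : Commute (g 0) ((List.ofFn fun i : Fin k => f i.succ).prod) := by
      apply Commute.list_prod_right
      intro x hx
      rw [List.mem_ofFn] at hx
      obtain ⟨i, rfl⟩ := hx
      exact (h i.succ 0).symm
    rw [mul_assoc, mul_assoc, ← mul_assoc (g 0), hc.eq, mul_assoc]

lemma monoEv_add (p : Fin n → ℍq) (hp : ∀ i j, Commute (p i) (p j))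
    (m₁ m₂ : Fin n →₀ ℕ) :
    monoEv p (m₁ + m₂) = monoEv p m₁ * monoEv p m₂ := by
  unfold monoEv
  rw [← listProd_mul (fun i => p i ^ m₁ i) (fun i => p i ^ m₂ i)
      (fun i j => (hp i j).pow_pow _ _)]
  have : (fun i => p i ^ (m₁ + m₂) i) = fun i => p i ^ m₁ i * p i ^ m₂ i := by
    funext i; rw [Finsupp.add_apply, pow_add]
  rw [this]

lemma commute_monoEv (p : Fin n → ℍq) (hp : ∀ i j, Commute (p i) (p j))
    (m₁ m₂ : Fin n →₀ ℕ) : Commute (monoEv p m₁) (monoEv p m₂) := by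
  apply Commute.list_prod_right
  intro x hx
  rw [List.mem_ofFn] at hx
  obtain ⟨i, rfl⟩ := hx
  apply Commute.list_prod_left
  intro y hy
  rw [List.mem_ofFn] at hy
  obtain ⟨j, rfl⟩ := hy
  exact ((hp j i).pow_pow _ _)

lemma qconj_pow (c x : ℍq) (hc : c ≠ 0) (k : ℕ) :
    (c⁻¹ * x * c) ^ k = c⁻¹ * x ^ k * c := by
  induction k with
  | zero => simp [inv_mul_cancel₀ hc]
  | succ k ih =>
    rw [pow_succ, pow_succ, ih]
    simp only [mul_assoc]
    rw [← mul_assoc c c⁻¹, mul_inv_cancel₀ hc, one_mul]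

lemma listProd_conj {k : ℕ} (f : Fin k → ℍq) (c : ℍq) (hc : c ≠ 0) :
    (List.ofFn fun i => c⁻¹ * f i * c).prod = c⁻¹ * (List.ofFn f).prod * c := by
  induction k with
  | zero => simp [List.ofFn_zero, inv_mul_cancel₀ hc]
  | succ k ih =>
    rw [List.ofFn_succ, List.ofFn_succ (f := f)]
    simp only [List.prod_cons]
    rw [ih (fun i => f i.succ)]
    simp only [mul_assoc]
    rw [← mul_assoc c c⁻¹, mul_inv_cancel₀ hc, one_mul]

lemma monoEv_conj (p : Fin n → ℍq) (c : ℍq) (hc : c ≠ 0) (m : Fin n →₀ ℕ) :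
    monoEv (fun i => c⁻¹ * p i * c) m = c⁻¹ * monoEv p m * c := by
  unfold monoEv
  have : (fun i => ((fun i => c⁻¹ * p i * c) i) ^ m i) = fun i => c⁻¹ * (p i ^ m i) * c := by
    funext i; exact qconj_pow c (p i) hc (m i)
  rw [this, listProd_conj _ _ hc]

end Aux
section Aux2

open AddMonoidAlgebra

variable {n : ℕ}

/-- Pairwise commuting components. -/
def PComm {n : ℕ} (p : Fin n → ℍq) : Prop := ∀ i j, Commute (p i) (p j)

lemma peval_mul (p : Fin n → ℍq) (hp : PComm p) (f g : SP n) :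
    peval p (f * g) = Finsupp.sum g.coeff fun j b => monoEv p j * peval p f * b := by
  rw [AddMonoidAlgebra.mul_def]
  rw [← pevalHom_apply, map_finsuppSum]
  simp only [map_finsuppSum, pevalHom_apply, peval_single]
  rw [Finsupp.sum_comm]
  apply Finsupp.sum_congr
  intro j _
  rw [peval_eq_sum, Finsupp.mul_sum, Finsupp.sum_mul]
  apply Finsupp.sum_congr
  intro i _
  rw [monoEv_add p hp, (commute_monoEv p hp i j).eq]
  simp only [mul_assoc]

lemma peval_mul_zero (p : Fin n → ℍq) (hp : PComm p) {f : SP n} (g : SP n)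
    (hf : peval p f = 0) : peval p (f * g) = 0 := by
  rw [peval_mul p hp,
    Finsupp.sum_congr (g2 := fun _ _ => 0) fun j _ => by rw [hf, mul_zero, zero_mul]]
  exact Finset.sum_const_zero

lemma peval_mul_of_ne (p : Fin n → ℍq) (hp : PComm p) {f : SP n} (g : SP n)
    (hf : peval p f ≠ 0) :
    peval p (f * g)
      = peval p f * peval (fun i => (peval p f)⁻¹ * p i * (peval p f)) g := by
  rw [peval_mul p hp,
    peval_eq_sum (fun i => (peval p f)⁻¹ * p i * peval p f) g, Finsupp.mul_sum]
  apply Finsupp.sum_congr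
  intro j _
  rw [monoEv_conj p (peval p f) hf j]
  simp only [mul_assoc]
  rw [← mul_assoc (peval p f) (peval p f)⁻¹, mul_inv_cancel₀ hf, one_mul]

lemma PComm.conj {p : Fin n → ℍq} (hp : PComm p) (c : ℍq) :
    PComm (fun i => c⁻¹ * p i * c) := by
  intro i j
  rcases eq_or_ne c 0 with rfl | hc
  · simp only [inv_zero, zero_mul, mul_zero]
    exact Commute.refl 0
  · have h1 : ∀ x y : ℍq, (c⁻¹ * x * c) * (c⁻¹ * y * c) = c⁻¹ * (x * y) * c := by
      intro x y
      simp only [mul_assoc]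
      rw [← mul_assoc c c⁻¹, mul_inv_cancel₀ hc, one_mul]
    unfold Commute SemiconjBy
    rw [h1, h1, (hp i j).eq]

lemma commSlice_pcomm {p : Fin n → ℍq} (hp : p ∈ commSlice n) : PComm p := by
  obtain ⟨K, -, hK⟩ := hp
  intro i j
  obtain ⟨x, y, hx⟩ := hK i
  obtain ⟨x', y', hx'⟩ := hK j
  rw [hx, hx']
  have hAK : Commute ((x : ℍq) + (y : ℍq) * K) K :=
    (Quaternion.coe_commute x K).add_left ((Quaternion.coe_commute y K).mul_left (Commute.refl K))
  exact ((Quaternion.coe_commute x' _).symm).add_right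
    (((Quaternion.coe_commute y' _).symm).mul_right hAK)

end Aux2
section Aux3

open AddMonoidAlgebra

variable {n : ℕ}

lemma rconj_apply (f : SP n) (m : Fin n →₀ ℕ) : (rconj f).coeff m = star (f.coeff m) :=
  Finsupp.mapRange_apply (hf := star_zero _)

lemma rconj_rconj (f : SP n) : rconj (rconj f) = f :=
  AddMonoidAlgebra.coeff_injective <| Finsupp.ext fun m => by simp [rconj_apply]

lemma rconj_eq_zero_iff {f : SP n} : rconj f = 0 ↔ f = 0 := by
  constructor
  · intro h
    refine AddMonoidAlgebra.coeff_injective <| Finsupp.ext fun m => ?_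
    have h1 : (rconj f).coeff m = 0 := by rw [h]; rfl
    rw [rconj_apply] at h1
    exact star_eq_zero.mp h1
  · rintro rfl
    exact AddMonoidAlgebra.coeff_injective <| Finsupp.ext fun m => by simp [rconj_apply]

lemma qid (a b : ℍq) : a * star b + b * star a = star a * b + star b * a := by
  apply Quaternion.ext <;>
    simp [Quaternion.re_mul, Quaternion.imI_mul, Quaternion.imJ_mul, Quaternion.imK_mul] <;>
    ring

lemma mul_apply' (f g : SP n) (m : Fin n →₀ ℕ) :
    (f * g).coeff m = Finsupp.sum f.coeff fun i a => Finsupp.sum g.coeff fun j b =>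
      if i + j = m then a * b else 0 := by
  classical
  exact AddMonoidAlgebra.coeff_mul f g m

lemma symzn_apply (f : SP n) (m : Fin n →₀ ℕ) :
    (symzn f).coeff m = ∑ i ∈ f.coeff.support, ∑ j ∈ f.coeff.support,
      (if i + j = m then f.coeff i * star (f.coeff j) else 0) := by
  unfold symzn
  rw [mul_apply']
  apply Finset.sum_congr rfl
  intro i _
  dsimp only
  unfold rconj
  rw [AddMonoidAlgebra.coeff_ofCoeff, Finsupp.sum_mapRange_index (by simp)]
  rfl

lemma csymzn_apply (f : SP n) (m : Fin n →₀ ℕ) :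
    (rconj f * f).coeff m = ∑ i ∈ f.coeff.support, ∑ j ∈ f.coeff.support,
      (if i + j = m then star (f.coeff i) * f.coeff j else 0) := by
  rw [mul_apply']
  unfold rconj
  rw [AddMonoidAlgebra.coeff_ofCoeff, Finsupp.sum_mapRange_index (by simp)]
  rfl

lemma double_swap (s : Finset (Fin n →₀ ℕ)) (m : Fin n →₀ ℕ)
    (F : (Fin n →₀ ℕ) → (Fin n →₀ ℕ) → ℍq) :
    (∑ i ∈ s, ∑ j ∈ s, (if i + j = m then F i j else 0))
    = ∑ i ∈ s, ∑ j ∈ s, (if i + j = m then F j i else 0) := by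
  classical
  rw [Finset.sum_comm]
  apply Finset.sum_congr rfl
  intro i _
  apply Finset.sum_congr rfl
  intro j _
  rw [add_comm j i]

lemma hq_two_ne_zero : (2 : ℍq) ≠ 0 := by
  intro h
  have h1 : ((2 : ℝ) : ℍq) = ((0 : ℝ) : ℍq) := by push_cast; exact_mod_cast h
  exact two_ne_zero (Quaternion.coe_injective h1)

lemma symzn_real (f : SP n) : RealCoeffs (symzn f) := by
  intro m
  have hstar : star ((symzn f).coeff m) = (symzn f).coeff m := by
    classical
    rw [symzn_apply, star_sum]
    conv_rhs => rw [double_swap f.coeff.support m (fun i j => f.coeff i * star (f.coeff j))]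
    apply Finset.sum_congr rfl
    intro i _
    rw [star_sum]
    apply Finset.sum_congr rfl
    intro j _
    rw [apply_ite star, star_zero, star_mul, star_star]
  rw [Quaternion.star_eq_self] at hstar
  exact ⟨((symzn f).coeff m).re, hstar⟩

lemma symzn_comm (f : SP n) : symzn f = rconj f * f := by
  refine AddMonoidAlgebra.coeff_injective <| Finsupp.ext fun m => ?_
  classical
  have hdouble : (symzn f).coeff m + (symzn f).coeff m = (rconj f * f).coeff m + (rconj f * f).coeff m := by
    rw [symzn_apply, csymzn_apply]
    nth_rewrite 2 [double_swap f.coeff.support m (fun i j => f.coeff i * star (f.coeff j))]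
    nth_rewrite 2 [double_swap f.coeff.support m (fun i j => star (f.coeff i) * f.coeff j)]
    rw [← Finset.sum_add_distrib, ← Finset.sum_add_distrib]
    apply Finset.sum_congr rfl; intro i _
    rw [← Finset.sum_add_distrib, ← Finset.sum_add_distrib]
    apply Finset.sum_congr rfl; intro j _
    by_cases h : i + j = m
    · simp only [if_pos h]
      exact qid (f.coeff i) (f.coeff j)
    · simp [if_neg h]
  have h2 : (2 : ℍq) * (symzn f).coeff m = 2 * ((rconj f * f).coeff m) := by
    rw [two_mul, two_mul]; exact hdouble
  exact mul_left_cancel₀ hq_two_ne_zero h2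

end Aux3
section Aux4

open AddMonoidAlgebra

variable {n : ℕ}

lemma mul_apply'' (f g : SP n) (m : Fin n →₀ ℕ) :
    (f * g).coeff m = ∑ i ∈ f.coeff.support, ∑ j ∈ g.coeff.support,
      (if i + j = m then f.coeff i * g.coeff j else 0) := by
  rw [mul_apply']; rfl

lemma rconj_support (f : SP n) : (rconj f).coeff.support = f.coeff.support :=
  Finset.ext fun m => by
    simp [Finsupp.mem_support_iff, rconj_apply, star_eq_zero]

lemma rconj_mul (f g : SP n) : rconj (f * g) = rconj g * rconj f := by
  refine AddMonoidAlgebra.coeff_injective <| Finsupp.ext fun m => ?_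
  rw [rconj_apply, mul_apply'', mul_apply'', rconj_support, rconj_support, star_sum]
  rw [Finset.sum_comm]
  apply Finset.sum_congr rfl
  intro j _
  rw [star_sum]
  apply Finset.sum_congr rfl
  intro i _
  rw [apply_ite star, star_zero, star_mul, add_comm j i, rconj_apply, rconj_apply]

lemma real_central {f : SP n} (hf : RealCoeffs f) (g : SP n) : f * g = g * f := by
  refine AddMonoidAlgebra.coeff_injective <| Finsupp.ext fun m => ?_
  rw [mul_apply'', mul_apply'', Finset.sum_comm]
  apply Finset.sum_congr rfl
  intro j _
  apply Finset.sum_congr rfl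
  intro i _
  obtain ⟨r, hr⟩ := hf i
  rw [add_comm j i, hr, Quaternion.coe_commutes]

lemma peval_real_conj {f : SP n} (hf : RealCoeffs f) (p : Fin n → ℍq) (c : ℍq)
    (hc : c ≠ 0) :
    peval (fun i => c⁻¹ * p i * c) f = c⁻¹ * peval p f * c := by
  rw [peval_eq_sum, peval_eq_sum, Finsupp.sum, Finsupp.sum, Finset.mul_sum,
    Finset.sum_mul]
  apply Finset.sum_congr rfl
  intro m _
  rw [monoEv_conj p c hc m]
  obtain ⟨r, hr⟩ := hf m
  rw [hr]
  simp only [mul_assoc]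
  rw [Quaternion.coe_commutes]

lemma symzn_eq_zero_iff {f : SP n} : symzn f = 0 ↔ f = 0 := by
  unfold symzn
  constructor
  · intro h
    rcases mul_eq_zero.mp h with h | h
    · exact h
    · exact rconj_eq_zero_iff.mp h
  · rintro rfl; simp

end Aux4
section Aux5

open AddMonoidAlgebra

variable {n : ℕ}

lemma Cq_mul (a b : ℍq) : (Cq a : SP n) * Cq b = Cq (a * b) := by
  unfold Cq
  rw [AddMonoidAlgebra.single_mul_single, add_zero]

lemma one_eq_Cq : (1 : SP n) = Cq 1 := AddMonoidAlgebra.one_def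

lemma isUnit_Cq {c : ℍq} (hc : c ≠ 0) : IsUnit (Cq c : SP n) := by
  refine isUnit_iff_exists.mpr ⟨Cq c⁻¹, ?_, ?_⟩
  · rw [Cq_mul, mul_inv_cancel₀ hc, ← one_eq_Cq]
  · rw [Cq_mul, inv_mul_cancel₀ hc, ← one_eq_Cq]

lemma Cq_ne_zero {c : ℍq} (hc : c ≠ 0) : (Cq c : SP n) ≠ 0 := by
  intro h
  have := congrArg (fun f => AddMonoidAlgebra.coeff f 0) h
  simp [Cq, AddMonoidAlgebra.coeff_single] at this
  exact hc this

/-- The lex degree of a polynomial. -/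
def deglex (f : SP n) : Lex (Fin n →₀ ℕ) :=
  AddMonoidAlgebra.supDegree toLex f

lemma deglex_mul {f g : SP n} (hf : f ≠ 0) (hg : g ≠ 0) :
    deglex (f * g) = deglex f + deglex g := by
  apply AddMonoidAlgebra.supDegree_mul toLex.injective (fun _ _ => rfl)
  · exact mul_ne_zero
      ((AddMonoidAlgebra.leadingCoeff_ne_zero toLex.injective).mpr hf)
      ((AddMonoidAlgebra.leadingCoeff_ne_zero toLex.injective).mpr hg)
  · exact hf
  · exact hg

/-- A numeric degree. -/
def ndeg (f : SP n) : ℕ := (ofLex (deglex f)).sum fun _ e => e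

lemma ndeg_mul {f g : SP n} (hf : f ≠ 0) (hg : g ≠ 0) :
    ndeg (f * g) = ndeg f + ndeg g := by
  unfold ndeg
  rw [deglex_mul hf hg]
  have : ofLex (deglex f + deglex g) = ofLex (deglex f) + ofLex (deglex g) := rfl
  rw [this, Finsupp.sum_add_index' (fun _ => rfl) (fun _ _ _ => rfl)]

lemma eq_Cq_of_ndeg_zero {f : SP n} (hf : f ≠ 0) (hd : ndeg f = 0) :
    ∃ c : ℍq, c ≠ 0 ∧ f = Cq c := by
  obtain ⟨a, ha, hda⟩ := AddMonoidAlgebra.exists_supDegree_mem_support toLex hf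
  have ha0 : a = 0 := by
    have hsum : (a.sum fun _ e => e) = 0 := by
      have : ofLex (deglex f) = a := by rw [deglex, hda]; rfl
      rw [ndeg, this] at hd
      exact hd
    ext i
    rcases Finset.sum_eq_zero_iff.mp hsum i with h
    · by_cases hi : i ∈ a.support
      · exact Finset.sum_eq_zero_iff.mp hsum i hi
      · simpa [Finsupp.mem_support_iff] using hi
  have hsub : f.coeff.support ⊆ {0} := by
    intro m hm
    have h1 : toLex m ≤ AddMonoidAlgebra.supDegree toLex f :=
      Finset.le_sup hm
    rw [hda, ha0] at h1
    have hbot : (toLex (0 : Fin n →₀ ℕ)) = (⊥ : Lex (Fin n →₀ ℕ)) := rfl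
    rw [hbot, le_bot_iff] at h1
    have : m = 0 := toLex.injective (by rw [h1]; rfl)
    simp [this]
  have := Finsupp.support_subset_singleton.mp hsub
  refine ⟨f.coeff 0, ?_, AddMonoidAlgebra.coeff_injective this⟩
  intro h
  apply hf
  rw [← AddMonoidAlgebra.coeff_eq_zero, this, h]
  simp

lemma ndeg_pos_of_nonunit {f : SP n} (h0 : f ≠ 0) (hu : ¬ IsUnit f) :
    0 < ndeg f := by
  rcases Nat.eq_zero_or_pos (ndeg f) with h | h
  · obtain ⟨c, hc, rfl⟩ := eq_Cq_of_ndeg_zero h0 h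
    exact absurd (isUnit_Cq hc) hu
  · exact h

lemma rconj_one : rconj (1 : SP n) = 1 := by
  unfold rconj
  rw [one_eq_Cq]
  unfold Cq
  rw [AddMonoidAlgebra.coeff_single, Finsupp.mapRange_single, star_one, AddMonoidAlgebra.ofCoeff_single]

lemma spUnit_left {f g : SP n} (h : f * g = 1) : IsUnit f := by
  have hg : g ≠ 0 := by
    rintro rfl
    rw [mul_zero] at h
    exact one_ne_zero h.symm
  have hgf : g * f = 1 := by
    have h2 : (g * f - 1) * g = 0 := by
      rw [sub_mul, one_mul, mul_assoc, h, mul_one, sub_self]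
    rcases mul_eq_zero.mp h2 with h3 | h3
    · exact sub_eq_zero.mp h3
    · exact absurd h3 hg
  exact ⟨⟨f, g, h, hgf⟩, rfl⟩

lemma spUnit_right {f g : SP n} (h : f * g = 1) : IsUnit g := by
  have hf : f ≠ 0 := by
    rintro rfl
    rw [zero_mul] at h
    exact one_ne_zero h.symm
  have hgf : g * f = 1 := by
    have h2 : f * (g * f - 1) = 0 := by
      rw [mul_sub, mul_one, ← mul_assoc, h, one_mul, sub_self]
    rcases mul_eq_zero.mp h2 with h3 | h3
    · exact absurd h3 hf
    · exact sub_eq_zero.mp h3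
  exact ⟨⟨g, f, hgf, h⟩, rfl⟩

lemma rconj_isUnit {f : SP n} (hf : IsUnit f) : IsUnit (rconj f) := by
  obtain ⟨⟨u, v, huv, hvu⟩, rfl⟩ := hf
  have h1 : rconj v * rconj u = 1 := by
    rw [← rconj_mul, huv, rconj_one]
  exact spUnit_right h1

end Aux5
section Aux6

open AddMonoidAlgebra

variable {n : ℕ}

lemma listProd_ones {k : ℕ} (g : Fin k → ℍq) (h : ∀ i, g i = 1) :
    (List.ofFn g).prod = 1 := by
  apply List.prod_eq_one
  intro x hx
  rw [List.mem_ofFn] at hx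
  obtain ⟨i, rfl⟩ := hx
  exact h i

lemma monoEv_zero (p : Fin n → ℍq) : monoEv p 0 = 1 := by
  unfold monoEv
  exact listProd_ones _ fun i => by simp

lemma listProd_eq_single {k : ℕ} (g : Fin k → ℍq) (i : Fin k)
    (h : ∀ j, j ≠ i → g j = 1) : (List.ofFn g).prod = g i := by
  induction k with
  | zero => exact i.elim0
  | succ k ih =>
    rw [List.ofFn_succ, List.prod_cons]
    rcases Fin.eq_zero_or_eq_succ i with rfl | ⟨i', rfl⟩
    · rw [listProd_ones _ fun j => h j.succ (Fin.succ_ne_zero j), mul_one]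
    · rw [h 0 (Fin.succ_ne_zero i').symm, one_mul]
      exact ih (fun j => g j.succ) i' fun j hj => h j.succ fun hh => hj (Fin.succ_inj.mp hh)

lemma monoEv_single (p : Fin n → ℍq) (i : Fin n) :
    monoEv p (Finsupp.single i 1) = p i := by
  unfold monoEv
  rw [listProd_eq_single (fun k => p k ^ (Finsupp.single i 1) k) i
    (fun j hj => by
      show p j ^ (Finsupp.single i 1) j = 1
      rw [Finsupp.single_eq_of_ne' (Ne.symm hj), pow_zero])]
  rw [Finsupp.single_eq_same, pow_one]

lemma peval_Cq (p : Fin n → ℍq) (a : ℍq) : peval p (Cq a) = a := by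
  unfold Cq
  rw [peval_single, monoEv_zero, one_mul]

lemma peval_Xq (p : Fin n → ℍq) (i : Fin n) : peval p (Xq i) = p i := by
  unfold Xq
  rw [peval_single, monoEv_single, mul_one]

end Aux6
section Aux7

open AddMonoidAlgebra

variable {n : ℕ}

lemma peval_sub (p : Fin n → ℍq) (f g : SP n) :
    peval p (f - g) = peval p f - peval p g := by
  rw [← pevalHom_apply, map_sub, pevalHom_apply, pevalHom_apply]

lemma mem_span_one {x y : SP n} :
    x ∈ Submodule.span (SP n)ᵐᵒᵖ {y} ↔ ∃ c : SP n, y * c = x := by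
  rw [Submodule.mem_span_singleton]
  constructor
  · rintro ⟨a, rfl⟩; exact ⟨a.unop, rfl⟩
  · rintro ⟨c, rfl⟩; exact ⟨MulOpposite.op c, rfl⟩

lemma mem_span_two {x a b : SP n} :
    x ∈ Submodule.span (SP n)ᵐᵒᵖ ({a, b} : Set (SP n)) ↔
      ∃ c d : SP n, a * c + b * d = x := by
  rw [Submodule.mem_span_pair]
  constructor
  · rintro ⟨u, v, rfl⟩; exact ⟨u.unop, v.unop, rfl⟩
  · rintro ⟨c, d, rfl⟩; exact ⟨MulOpposite.op c, MulOpposite.op d, rfl⟩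

/-- The right ideal of polynomials vanishing at a point with commuting coordinates. -/
def Jpt (p : Fin n → ℍq) (hp : PComm p) : RIdeal n where
  carrier := {f | peval p f = 0}
  add_mem' := by
    intro a b ha hb
    show peval p (a + b) = 0
    rw [← pevalHom_apply, map_add, pevalHom_apply, pevalHom_apply,
      ha, hb, add_zero]
  zero_mem' := by
    show peval p 0 = 0
    rw [← pevalHom_apply, map_zero]
  smul_mem' := by
    intro c x hx
    show peval p (c • x) = 0
    have hcx : c • x = x * c.unop := rfl
    rw [hcx]
    exact peval_mul_zero p hp _ hx

lemma mem_Jpt {p : Fin n → ℍq} {hp : PComm p} {f : SP n} :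
    f ∈ Jpt p hp ↔ peval p f = 0 := Iff.rfl

lemma Jpt_CP (p : Fin n → ℍq) (hp : PComm p) : CompletelyPrime (Jpt p hp) := by
  intro P Q hPQ hguard
  by_cases hP : peval p P = 0
  · exact Or.inl hP
  · right
    have hconj : (fun i => (peval p P)⁻¹ * p i * peval p P) = p := by
      funext i
      have hRi : (Xq i - Cq (p i)) ∈ Jpt p hp := by
        rw [mem_Jpt, peval_sub, peval_Xq, peval_Cq, sub_self]
      have hg := hguard _ hRi
      rw [mem_Jpt, peval_mul_of_ne p hp _ hP] at hg
      have h2 := (mul_eq_zero.mp hg).resolve_left hP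
      rw [peval_sub, peval_Xq, peval_Cq, sub_eq_zero] at h2
      exact h2
    rw [mem_Jpt] at hPQ ⊢
    rw [peval_mul_of_ne p hp Q hP, hconj] at hPQ
    exact (mul_eq_zero.mp hPQ).resolve_left hP

lemma le_radq (I : RIdeal n) : I ≤ radq I :=
  le_sInf fun _ hJ => hJ.2

lemma radq_le_CP {I J : RIdeal n} (hJ : CompletelyPrime J) (hle : I ≤ J) :
    radq I ≤ J :=
  sInf_le ⟨hJ, hle⟩

lemma mem_radq {I : RIdeal n} {x : SP n} :
    x ∈ radq I ↔ ∀ J : RIdeal n, CompletelyPrime J → I ≤ J → x ∈ J := by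
  rw [radq, Submodule.mem_sInf]
  constructor
  · intro h J hJ hle; exact h J ⟨hJ, hle⟩
  · rintro h J ⟨hJ, hle⟩; exact h J hJ hle

lemma Vc_anti {I I' : RIdeal n} (h : I ≤ I') : Vc I' ⊆ Vc I := by
  rintro p ⟨hv, hc⟩
  exact ⟨fun P hP => hv P (h hP), hc⟩

lemma Vc_radq (I : RIdeal n) : Vc (radq I) = Vc I := by
  apply Set.Subset.antisymm (Vc_anti (le_radq I))
  rintro p ⟨hv, hc⟩
  refine ⟨fun P hP => ?_, hc⟩
  have hcomm := commSlice_pcomm hc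
  have hle : I ≤ Jpt p hcomm := fun f hf => hv f hf
  exact (radq_le_CP (Jpt_CP p hcomm) hle) hP

lemma mem_Vc_span_singleton {f : SP n} {p : Fin n → ℍq} :
    p ∈ Vc (Submodule.span (SP n)ᵐᵒᵖ {f}) ↔ p ∈ commSlice n ∧ peval p f = 0 := by
  constructor
  · rintro ⟨hv, hc⟩
    exact ⟨hc, hv f (Submodule.mem_span_singleton_self f)⟩
  · rintro ⟨hc, hf⟩
    refine ⟨fun P hP => ?_, hc⟩
    obtain ⟨c, rfl⟩ := mem_span_one.mp hP
    exact peval_mul_zero p (commSlice_pcomm hc) c hf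

end Aux7
section Aux8

open AddMonoidAlgebra

variable {n : ℕ}

lemma split_CP {H A B : SP n} (hH : H = A * B) {J : RIdeal n}
    (hJ : CompletelyPrime J) (hle : Submodule.span (SP n)ᵐᵒᵖ {H} ≤ J) :
    symzn B ∈ J ∨ Submodule.span (SP n)ᵐᵒᵖ {A} ≤ J := by
  by_cases hs : symzn B ∈ J
  · exact Or.inl hs
  · right
    rw [Submodule.span_le, Set.singleton_subset_iff]
    -- First show A * c ∈ J for all c, then conclude.
    have hmain : ∀ c : SP n, A * c ∈ J := by
      intro c
      have hkey : symzn B * (A * c) ∈ J := by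
        have heq : symzn B * (A * c) = H * (rconj B * c) := by
          rw [hH]
          calc symzn B * (A * c) = (symzn B * A) * c := by rw [mul_assoc]
            _ = (A * symzn B) * c := by rw [real_central (symzn_real B) A]
            _ = A * B * (rconj B * c) := by
                unfold symzn
                simp only [mul_assoc]
        rw [heq]
        apply hle
        exact mem_span_one.mpr ⟨rconj B * c, rfl⟩
      have hguard : ∀ R ∈ J, symzn B * R ∈ J := by
        intro R hR
        rw [real_central (symzn_real B) R]
        exact J.smul_mem (MulOpposite.op (symzn B)) hR
      rcases hJ (symzn B) (A * c) hkey hguard with h | h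
      · exact absurd h hs
      · exact h
    simpa using hmain 1

lemma meet_le {H A B : SP n} (hH : H = A * B)
    (hrad : radq (Submodule.span (SP n)ᵐᵒᵖ {H}) = Submodule.span (SP n)ᵐᵒᵖ {H}) :
    radq (Submodule.span (SP n)ᵐᵒᵖ {A})
      ⊓ radq (Submodule.span (SP n)ᵐᵒᵖ ({symzn B, H} : Set (SP n)))
      ≤ Submodule.span (SP n)ᵐᵒᵖ {H} := by
  rintro x ⟨hx1, hx2⟩
  rw [← hrad]
  rw [mem_radq]
  intro J hJ hle
  rcases split_CP hH hJ hle with hs | hA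
  · have hle2 : Submodule.span (SP n)ᵐᵒᵖ ({symzn B, H} : Set (SP n)) ≤ J := by
      rw [Submodule.span_le]
      rintro y (rfl | rfl)
      · exact hs
      · exact hle (Submodule.mem_span_singleton_self _)
    exact mem_radq.mp hx2 J hJ hle2
  · exact mem_radq.mp hx1 J hJ hA

lemma vc_cover {H A B : SP n} (hH : H = A * B) :
    Vc (Submodule.span (SP n)ᵐᵒᵖ {H}) =
      Vc (Submodule.span (SP n)ᵐᵒᵖ {A}) ∪
      Vc (Submodule.span (SP n)ᵐᵒᵖ ({symzn B, H} : Set (SP n))) := by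
  apply Set.Subset.antisymm
  · intro p hp
    obtain ⟨hc, hval⟩ := mem_Vc_span_singleton.mp hp
    have hcomm := commSlice_pcomm hc
    by_cases hA : peval p A = 0
    · exact Or.inl (mem_Vc_span_singleton.mpr ⟨hc, hA⟩)
    · right
      have hB : peval (fun i => (peval p A)⁻¹ * p i * peval p A) B = 0 := by
        have := hval
        rw [hH, peval_mul_of_ne p hcomm B hA] at this
        exact (mul_eq_zero.mp this).resolve_left hA
      have hsB : peval p (symzn B) = 0 := by
        have h1 : peval (fun i => (peval p A)⁻¹ * p i * peval p A) (symzn B) = 0 := by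
          unfold symzn
          exact peval_mul_zero _ (hcomm.conj (peval p A)) _ hB
        rw [peval_real_conj (symzn_real B) p (peval p A) hA] at h1
        have h2 := (mul_eq_zero.mp h1).resolve_right hA
        exact (mul_eq_zero.mp h2).resolve_left (inv_ne_zero hA)
      refine ⟨fun P hP => ?_, hc⟩
      obtain ⟨c, d, rfl⟩ := mem_span_two.mp hP
      rw [← pevalHom_apply, map_add, pevalHom_apply, pevalHom_apply,
        peval_mul_zero p hcomm c hsB, peval_mul_zero p hcomm d hval, add_zero]
  · rintro p (hp | hp)
    · obtain ⟨hc, hA⟩ := mem_Vc_span_singleton.mp hp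
      refine mem_Vc_span_singleton.mpr ⟨hc, ?_⟩
      rw [hH]
      exact peval_mul_zero p (commSlice_pcomm hc) B hA
    · apply Vc_anti (I := Submodule.span (SP n)ᵐᵒᵖ {H}) ?_ hp
      apply Submodule.span_mono
      intro y hy
      rw [Set.mem_singleton_iff] at hy
      subst hy
      right
      rfl

lemma symzn_mem {H A B : SP n} (hH : H = A * B) (hH0 : H ≠ 0)
    (hA0 : A ≠ 0) (hBnu : ¬ IsUnit B)
    (hrad : radq (Submodule.span (SP n)ᵐᵒᵖ {H}) = Submodule.span (SP n)ᵐᵒᵖ {H})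
    (hirr : ¬ VcReducible (Submodule.span (SP n)ᵐᵒᵖ {H})) :
    symzn B ∈ Submodule.span (SP n)ᵐᵒᵖ {H} := by
  set R1 := radq (Submodule.span (SP n)ᵐᵒᵖ {A}) with hR1def
  set R2 := radq (Submodule.span (SP n)ᵐᵒᵖ ({symzn B, H} : Set (SP n))) with hR2def
  have hAnotmem : A ∉ Submodule.span (SP n)ᵐᵒᵖ {H} := by
    intro hmem
    obtain ⟨c, hc⟩ := mem_span_one.mp hmem
    rw [hH] at hc
    have : A * (B * c) = A * 1 := by rw [mul_one, ← mul_assoc]; exact hc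
    have hBc := mul_left_cancel₀ hA0 this
    exact hBnu (spUnit_left hBc)
  have hAmemR1 : A ∈ R1 := le_radq _ (Submodule.mem_span_singleton_self A)
  have hsymmemR2 : symzn B ∈ R2 :=
    le_radq _ (Submodule.subset_span (Set.mem_insert _ _))
  have hHmemR2 : H ∈ R2 :=
    le_radq _ (Submodule.subset_span (Set.mem_insert_of_mem _ rfl))
  have hVc : Vc (Submodule.span (SP n)ᵐᵒᵖ {H}) = Vc R1 ∪ Vc R2 := by
    rw [hR1def, hR2def, Vc_radq, Vc_radq]
    exact vc_cover hH
  have hcases : R1 = ⊤ ∨ R2 = ⊤ ∨ R1 ≤ R2 ∨ R2 ≤ R1 := by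
    by_contra hcon
    push_neg at hcon
    obtain ⟨h1, h2, h3, h4⟩ := hcon
    apply hirr
    refine ⟨R1, R2, ?_, h1, ?_, h2, h3, h4, hVc⟩
    · intro hbot
      rw [hbot] at hAmemR1
      exact hA0 ((Submodule.mem_bot _).mp hAmemR1)
    · intro hbot
      rw [hbot] at hHmemR2
      exact hH0 ((Submodule.mem_bot _).mp hHmemR2)
  rcases hcases with htop | htop | hle | hle
  · -- R1 = ⊤ : every CP ideal over ⟨H⟩ contains symzn B
    rw [← hrad, mem_radq]
    intro J hJ hle
    rcases split_CP hH hJ hle with hs | hA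
    · exact hs
    · have : R1 ≤ J := radq_le_CP hJ hA
      rw [htop] at this
      have : J = ⊤ := top_le_iff.mp this
      rw [this]
      exact Submodule.mem_top
  · -- R2 = ⊤ : then A ∈ ⟨H⟩, contradiction
    exfalso
    apply hAnotmem
    rw [← hrad, mem_radq]
    intro J hJ hle
    rcases split_CP hH hJ hle with hs | hA
    · have hle2 : Submodule.span (SP n)ᵐᵒᵖ ({symzn B, H} : Set (SP n)) ≤ J := by
        rw [Submodule.span_le]
        rintro y (rfl | rfl)
        · exact hs
        · exact hle (Submodule.mem_span_singleton_self _)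
      have : R2 ≤ J := radq_le_CP hJ hle2
      rw [htop] at this
      rw [top_le_iff.mp this]
      exact Submodule.mem_top
    · exact hA (Submodule.mem_span_singleton_self A)
  · -- R1 ≤ R2 : then A ∈ ⟨H⟩, contradiction
    exfalso
    apply hAnotmem
    exact meet_le hH hrad ⟨hAmemR1, hle hAmemR1⟩
  · -- R2 ≤ R1 : symzn B ∈ ⟨H⟩
    exact meet_le hH hrad ⟨hle hsymmemR2, hsymmemR2⟩

end Aux8
/-- If `⟨H⟩` is radical and `V_c(⟨H⟩)` is irreducible, then `H` is
irreducible or `H` is (up to a constant) the symmetrization of an irreducible polynomial. -/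
theorem stmt17 {n : ℕ} (H : SP n) (h0 : H ≠ 0) (hu : ¬ IsUnit H)
    (hrad : radq (Submodule.span (SP n)ᵐᵒᵖ {H}) = Submodule.span (SP n)ᵐᵒᵖ {H})
    (hirr : ¬ VcReducible (Submodule.span (SP n)ᵐᵒᵖ {H})) :
    IrredPoly H ∨ ∃ Q : SP n, IrredPoly Q ∧
      Submodule.span (SP n)ᵐᵒᵖ {H} = Submodule.span (SP n)ᵐᵒᵖ {symzn Q} := by
  classical
  by_cases hirrH : IrredPoly H
  · exact Or.inl hirrH
  right
  have hfac : ∃ P Q : SP n, H = P * Q ∧ ¬ IsUnit P ∧ ¬ IsUnit Q := by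
    unfold IrredPoly at hirrH
    push_neg at hirrH
    obtain ⟨P, Q, hPQ, hP, hQ⟩ := hirrH h0 hu
    exact ⟨P, Q, hPQ, hP, hQ⟩
  obtain ⟨P0, Q0, hH0fac, hP0, hQ0⟩ := hfac
  have hex : ∃ d, ∃ A B : SP n, H = A * B ∧ ¬ IsUnit B ∧ ndeg B = d :=
    ⟨ndeg Q0, P0, Q0, hH0fac, hQ0, rfl⟩
  obtain ⟨A, B, hH, hBnu, hBd⟩ := Nat.find_spec hex
  have hB0 : B ≠ 0 := fun h => h0 (by rw [hH, h, mul_zero])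
  have hA0 : A ≠ 0 := fun h => h0 (by rw [hH, h, zero_mul])
  have hBirr : IrredPoly B := by
    refine ⟨hB0, hBnu, ?_⟩
    intro P Q hPQ
    by_contra hcon
    push_neg at hcon
    obtain ⟨hPu, hQu⟩ := hcon
    have hP0' : P ≠ 0 := fun h => hB0 (by rw [hPQ, h, zero_mul])
    have hQ0' : Q ≠ 0 := fun h => hB0 (by rw [hPQ, h, mul_zero])
    have hlt : ndeg Q < Nat.find hex := by
      rw [← hBd, hPQ, ndeg_mul hP0' hQ0']
      have := ndeg_pos_of_nonunit hP0' hPu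
      omega
    exact Nat.find_min hex hlt ⟨A * P, Q, by rw [hH, hPQ, mul_assoc], hQu, rfl⟩
  have hAnu : ¬ IsUnit A := by
    intro hA
    obtain ⟨u, hu'⟩ := hA
    have hBeq : B = (↑u⁻¹ * P0) * Q0 := by
      have h1 : (↑u⁻¹ : SP n) * H = B := by
        rw [hH, ← hu', ← mul_assoc, Units.inv_mul, one_mul]
      rw [← h1, hH0fac, mul_assoc]
    rcases hBirr.2.2 _ _ hBeq with h | h
    · apply hP0
      have h2 : P0 = ↑u * (↑u⁻¹ * P0) := by rw [← mul_assoc, Units.mul_inv, one_mul]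
      rw [h2]
      exact (Units.isUnit u).mul h
    · exact hQ0 h
  have hmem := symzn_mem hH h0 hA0 hBnu hrad hirr
  obtain ⟨W, hW⟩ := mem_span_one.mp hmem
  have hW0 : W ≠ 0 := by
    intro h
    rw [h, mul_zero] at hW
    exact hB0 (symzn_eq_zero_iff.mp hW.symm)
  by_cases hWu : IsUnit W
  · obtain ⟨w, hw⟩ := hWu
    refine ⟨B, hBirr, ?_⟩
    apply le_antisymm
    · rw [Submodule.span_le, Set.singleton_subset_iff]
      apply mem_span_one.mpr
      refine ⟨↑w⁻¹, ?_⟩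
      rw [← hW, ← hw, mul_assoc, Units.mul_inv, mul_one]
    · rw [Submodule.span_le, Set.singleton_subset_iff]
      exact mem_span_one.mpr ⟨W, hW⟩
  · exfalso
    have hcomm : W * H = H * W := by
      have h1 : H * (W * H) = H * (H * W) := by
        rw [← mul_assoc, hW, real_central (symzn_real B) H, ← hW]
      exact mul_left_cancel₀ h0 h1
    have hkey : rconj B = W * A := by
      have h1 : rconj B * B = (W * A) * B := by
        rw [← symzn_comm B, ← hW, ← hcomm, hH, mul_assoc]
      exact mul_right_cancel₀ hB0 h1
    have hBeq : B = rconj A * rconj W := by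
      rw [← rconj_rconj B, hkey, rconj_mul]
    rcases hBirr.2.2 _ _ hBeq with h | h
    · apply hAnu
      have h2 := rconj_isUnit h
      rwa [rconj_rconj] at h2
    · apply hWu
      have h2 := rconj_isUnit h
      rwa [rconj_rconj] at h2

end
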